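/- Let K₁ = ⟨U₁, L₁, I₁⟩ and K₂ = ⟨U₂, L₂, I₂⟩ be partial linear spaces with U₁ ∩ U₂ = ∅ and L₁ ∩ L₂ = ∅, and let ∞: L₁ → U₂ satisfy condition (∗): whenever a point x ∈ U₁ is incident (under I₁) with lines A, B ∈ L₁ and ∞(A) = ∞(B), then A = B. Then the structure K₁ ⋊_∞ K₂ with point set U₁ ∪ U₂, line set L₁ ∪ L₂, and incidence I₁ ∪ I₂ ∪ {(∞(A), A) : A ∈ L₁} is a partial linear space. -/
import Mathlib


/-- An incidence structure: a set of points, a set of lines (inside ambient types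
`P` and `L`), and an incidence relation. -/
structure IncStr (P : Type*) (L : Type*) where
  pts : Set P
  lns : Set L
  inc : P → L → Prop

namespace IncStr

variable {P L P' L' : Type*}

/-- Incidence only relates points of the structure with lines of the structure. -/
def Proper (K : IncStr P L) : Prop :=
  ∀ p l, K.inc p l → p ∈ K.pts ∧ l ∈ K.lns

/-- A partial linear space: two distinct points incident with two lines force the
lines to coincide. -/
def IsPLS (K : IncStr P L) : Prop :=
  K.Proper ∧
    ∀ a b A B, a ≠ b → K.inc a A → K.inc b A → K.inc a B → K.inc b B → A = B

/-- A subspace: whenever two distinct points of `H` are incident with a line, every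
point incident with that line belongs to `H`. -/
def IsSubspace (K : IncStr P L) (H : Set P) : Prop :=
  H ⊆ K.pts ∧
    ∀ a b A, a ∈ H → b ∈ H → a ≠ b → K.inc a A → K.inc b A →
      ∀ x, K.inc x A → x ∈ H

/-- A hyperplane: a proper subspace met by every line. -/
def IsHyperplane (K : IncStr P L) (H : Set P) : Prop :=
  K.IsSubspace H ∧ H ≠ K.pts ∧ ∀ A ∈ K.lns, ∃ x ∈ H, K.inc x A

/-- `L[H]`: the lines all of whose incident points lie in `H`. -/
def linesIn (K : IncStr P L) (H : Set P) : Set L :=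
  {A ∈ K.lns | ∀ x, K.inc x A → x ∈ H}

/-- The restriction `K↾H`. -/
def restrict (K : IncStr P L) (H : Set P) : IncStr P L where
  pts := H
  lns := K.linesIn H
  inc := fun p l => K.inc p l ∧ p ∈ H ∧ l ∈ K.linesIn H

/-- The reduct `K∖H`. -/
def reduct (K : IncStr P L) (H : Set P) : IncStr P L where
  pts := K.pts \ H
  lns := K.lns \ K.linesIn H
  inc := fun p l => K.inc p l ∧ p ∈ K.pts \ H ∧ l ∈ K.lns \ K.linesIn H

/-- The dual structure `K°`. -/
def dual (K : IncStr P L) : IncStr L P where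
  pts := K.lns
  lns := K.pts
  inc := fun l p => K.inc p l

/-- The join `K₁ ⋊_∞ K₂` determined by a map `f = ∞` from (the ambient type of)
lines of `K₁` to points of `K₂`. -/
def join (K₁ K₂ : IncStr P L) (f : L → P) : IncStr P L where
  pts := K₁.pts ∪ K₂.pts
  lns := K₁.lns ∪ K₂.lns
  inc := fun p l => K₁.inc p l ∨ K₂.inc p l ∨ (l ∈ K₁.lns ∧ p = f l)

/-- Condition (∗): a point of `K₁` incident with two lines of `K₁` having the same
image under `∞` forces the lines to coincide. -/
def StarCond (K₁ : IncStr P L) (f : L → P) : Prop :=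
  ∀ x A B, K₁.inc x A → K₁.inc x B → f A = f B → A = B

/-- The rank of a point: the number of lines incident with it. -/
noncomputable def pointRank (K : IncStr P L) (p : P) : ℕ :=
  {l | K.inc p l}.ncard

/-- The size of a line: the number of points incident with it. -/
noncomputable def lineSize (K : IncStr P L) (l : L) : ℕ :=
  {p | K.inc p l}.ncard

/-- A finite `(ν_ρ, β_κ)`-configuration. -/
def IsConfig (K : IncStr P L) (ν ρ β κ : ℕ) : Prop :=
  K.pts.Finite ∧ K.lns.Finite ∧ K.IsPLS ∧
  K.pts.ncard = ν ∧ K.lns.ncard = β ∧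
  (∀ p ∈ K.pts, K.pointRank p = ρ) ∧
  (∀ l ∈ K.lns, K.lineSize l = κ)

/-- A binomial configuration of type `B(k,m)`. -/
def IsBinomial (K : IncStr P L) (k m : ℕ) : Prop :=
  K.IsConfig ((m + k - 1).choose k) k ((m + k - 1).choose m) m

/-- `(fp, fl)` is an isomorphism of incidence structures: a pair of bijections
(on points and on lines) preserving and reflecting incidence. -/
def IsIso (K : IncStr P L) (K' : IncStr P' L') (fp : P → P') (fl : L → L') : Prop :=
  Set.BijOn fp K.pts K'.pts ∧ Set.BijOn fl K.lns K'.lns ∧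
    ∀ p ∈ K.pts, ∀ l ∈ K.lns, (K.inc p l ↔ K'.inc (fp p) (fl l))

def Isomorphic (K : IncStr P L) (K' : IncStr P' L') : Prop :=
  ∃ fp fl, IsIso K K' fp fl

/-- A formally disjoint (tagged) copy of an incidence structure. -/
def tag (K : IncStr P L) (b : Bool) : IncStr (P × Bool) (L × Bool) where
  pts := (fun p => (p, b)) '' K.pts
  lns := (fun l => (l, b)) '' K.lns
  inc := fun p l => K.inc p.1 l.1 ∧ p.2 = b ∧ l.2 = b

end IncStr

/-- The combinatorial Grassmannian `G(Y,k) = ⟨℘_k(Y), ℘_{k+1}(Y), ⊂⟩`. -/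
def Gras {α : Type*} (Y : Finset α) (k : ℕ) : IncStr (Finset α) (Finset α) where
  pts := {a : Finset α | a ⊆ Y ∧ a.card = k}
  lns := {A : Finset α | A ⊆ Y ∧ A.card = k + 1}
  inc := fun a A => a ⊆ Y ∧ a.card = k ∧ A ⊆ Y ∧ A.card = k + 1 ∧ a ⊂ A

/-- The combinatorial Veronesian `V(Y,k)`: points are multisets of size `k` with
elements in `Y`, lines are multisets of size `< k` with elements in `Y`, a point `f`
is incident with a line `e` iff `f = e·x^{k-|e|}` for some `x ∈ Y`. -/
def Ver {α : Type*} (Y : Finset α) (k : ℕ) : IncStr (Multiset α) (Multiset α) where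
  pts := {f : Multiset α | (∀ x ∈ f, x ∈ Y) ∧ Multiset.card f = k}
  lns := {e : Multiset α | (∀ x ∈ e, x ∈ Y) ∧ Multiset.card e < k}
  inc := fun f e =>
    (∀ x ∈ f, x ∈ Y) ∧ Multiset.card f = k ∧
    (∀ x ∈ e, x ∈ Y) ∧ Multiset.card e < k ∧
    ∃ x ∈ Y, f = e + Multiset.replicate (k - Multiset.card e) x

/-- the join `K₁ ⋊_∞ K₂` of two partial linear spaces (with disjoint
point sets and disjoint line sets, `∞` mapping lines of `K₁` to points of `K₂`
and satisfying condition (∗)) is a partial linear space. -/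
theorem statement1 {P L : Type*} (K₁ K₂ : IncStr P L)
    (h₁ : K₁.IsPLS) (h₂ : K₂.IsPLS)
    (hdp : Disjoint K₁.pts K₂.pts) (hdl : Disjoint K₁.lns K₂.lns)
    (f : L → P) (hf : ∀ A ∈ K₁.lns, f A ∈ K₂.pts)
    (hstar : K₁.StarCond f) :
    (IncStr.join K₁ K₂ f).IsPLS := by
  obtain ⟨hp₁, hl₁⟩ := h₁
  obtain ⟨hp₂, hl₂⟩ := h₂
  constructor
  · rintro p l (h | h | ⟨hA, rfl⟩)
    · exact ⟨Or.inl (hp₁ p l h).1, Or.inl (hp₁ p l h).2⟩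
    · exact ⟨Or.inr (hp₂ p l h).1, Or.inr (hp₂ p l h).2⟩
    · exact ⟨Or.inr (hf l hA), Or.inl hA⟩
  · -- helper facts
    have dis : ∀ {x}, x ∈ K₁.pts → x ∈ K₂.pts → False := fun hx hy =>
      Set.disjoint_left.mp hdp hx hy
    have disl : ∀ {A}, A ∈ K₁.lns → A ∈ K₂.lns → False := fun hx hy =>
      Set.disjoint_left.mp hdl hx hy
    intro a b A B hab haA hbA haB hbB
    rcases haA with h1 | h1 | ⟨hA1, rfl⟩
    · -- a K₁-inc A, so A ∈ L₁, a ∈ U₁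
      have hA1 : A ∈ K₁.lns := (hp₁ a A h1).2
      have ha1 : a ∈ K₁.pts := (hp₁ a A h1).1
      rcases haB with g1 | g1 | ⟨hB1, hafB⟩
      · -- a K₁-inc B too
        have hB1 : B ∈ K₁.lns := (hp₁ a B g1).2
        -- now consider b on A and b on B
        rcases hbA with k1 | k1 | ⟨_, rfl⟩
        · rcases hbB with m1 | m1 | ⟨_, hbfB⟩
          · exact hl₁ a b A B hab h1 k1 g1 m1
          · exact absurd (hp₂ b B m1).1 (fun h => dis (hp₁ b A k1).1 h)
          · exact absurd (hbfB ▸ hf B hB1) (fun h => dis (hp₁ b A k1).1 h)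
        · exact absurd (hp₂ b A k1).2 (fun h => disl hA1 h)
        · -- b = f A; then b on B: K₁ impossible (b ∈ U₂), K₂ impossible (B ∈ L₁)
          rcases hbB with m1 | m1 | ⟨_, hbfB⟩
          · exact absurd (hp₁ _ B m1).1 (fun h => dis h (hf A hA1))
          · exact absurd (hp₂ _ B m1).2 (fun h => disl hB1 h)
          · exact hstar a A B h1 g1 hbfB
      · exact absurd (hp₂ a B g1).1 (fun h => dis ha1 h)
      · exact absurd (hafB ▸ hf B hB1) (fun h => dis ha1 h)
    · -- a K₂-inc A, so A ∈ L₂, a ∈ U₂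
      have hA2 : A ∈ K₂.lns := (hp₂ a A h1).2
      have ha2 : a ∈ K₂.pts := (hp₂ a A h1).1
      rcases haB with g1 | g1 | ⟨hB1, hafB⟩
      · exact absurd (hp₁ a B g1).1 (fun h => dis h ha2)
      · -- a K₂-inc B; b on A must be K₂
        rcases hbA with k1 | k1 | ⟨hA1, rfl⟩
        · exact absurd (hp₁ b A k1).2 (fun h => disl h hA2)
        · rcases hbB with m1 | m1 | ⟨hB1, rfl⟩
          · exact absurd (hp₁ b B m1).2 (fun h => disl h (hp₂ a B g1).2)
          · exact hl₂ a b A B hab h1 k1 g1 m1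
          · exact absurd hB1 (fun h => disl h (hp₂ a B g1).2)
        · exact absurd hA1 (fun h => disl h hA2)
      · -- a = f B with B ∈ L₁; b on A is K₂, b on B forces b = f B = a, contra
        rcases hbB with m1 | m1 | ⟨_, hbfB⟩
        · rcases hbA with k1 | k1 | ⟨hA1, rfl⟩
          · exact absurd (hp₁ b A k1).2 (fun h => disl h hA2)
          · exact absurd (hp₁ b B m1).1 (fun h => dis h (hp₂ b A k1).1)
          · exact absurd hA1 (fun h => disl h hA2)
        · exact absurd (hp₂ b B m1).2 (fun h => disl hB1 h)
        · exact absurd (hafB.trans hbfB.symm) hab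
    · -- a = f A with A ∈ L₁
      have haU2 : f A ∈ K₂.pts := hf A hA1
      rcases haB with g1 | g1 | ⟨hB1, hafB⟩
      · exact absurd (hp₁ (f A) B g1).1 (fun h => dis h haU2)
      · -- a K₂-inc B so B ∈ L₂; b on A must be via f (b ∈ U₂ needed) or K₁
        have hB2 : B ∈ K₂.lns := (hp₂ (f A) B g1).2
        rcases hbA with k1 | k1 | ⟨_, rfl⟩
        · rcases hbB with m1 | m1 | ⟨hB1, rfl⟩
          · exact absurd (hp₁ b B m1).2 (fun h => disl h hB2)
          · exact absurd (hp₁ b A k1).1 (fun h => dis h (hp₂ b B m1).1)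
          · exact absurd hB1 (fun h => disl h hB2)
        · exact absurd (hp₂ b A k1).2 (fun h => disl hA1 h)
        · exact absurd rfl hab
      · -- both a = f A and a = f B with A,B ∈ L₁
        rcases hbA with k1 | k1 | ⟨_, rfl⟩
        · rcases hbB with m1 | m1 | ⟨_, hbfB⟩
          · exact hstar b A B k1 m1 (hafB ▸ rfl)
          · exact absurd (hp₂ b B m1).1 (fun h => dis (hp₁ b A k1).1 h)
          · exact absurd (hbfB ▸ hf B hB1) (fun h => dis (hp₁ b A k1).1 h)
        · exact absurd (hp₂ b A k1).2 (fun h => disl hA1 h)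
        · exact absurd rfl hab
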